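/- (Trilinear estimate for R_3 restricted to an arbitrary index set) Let s > 1/2 and let 𝒟 be any subset of triples of nonzero integers. Then for every t ∈ ℝ the operator R_3^𝒟, defined componentwise for k ≠ 0 by R_3^𝒟(φ,ψ,ξ)_k = Σ_{k1+k2+k3=k, (k1,k2,k3)∈𝒟} e^{3 i (k1+k2)(k2+k3)(k1+k3) t} φ_{k1} ψ_{k2} ξ_{k3} / k1, maps (Ḣ^s)³ into Ḣ^s and satisfies ‖R_3^𝒟(φ,ψ,ξ)‖_{Ḣ^s} ≤ C(s) ‖φ‖_{Ḣ^s} ‖ψ‖_{Ḣ^s} ‖ξ‖_{Ḣ^s}, where the constant C(s) does not depend on 𝒟 or t. -/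

import Mathlib

open MeasureTheory Set

noncomputable section

/-- The weight `|k|^(2s)` appearing in the `Ḣ^s` norm. -/
def wt (s : ℝ) (k : ℤ) : ℝ := ((|k| : ℤ) : ℝ) ^ (2 * s)

/-- Membership in the homogeneous Sobolev space `Ḣ^s` of sequences indexed by
nonzero integers. -/
def memH (s : ℝ) (u : ℤ → ℂ) : Prop :=
  Summable (fun k : {k : ℤ // k ≠ 0} => wt s k.1 * ‖u k.1‖ ^ 2)

/-- The `Ḣ^s` norm. -/
def hnorm (s : ℝ) (u : ℤ → ℂ) : ℝ :=
  Real.sqrt (∑' k : {k : ℤ // k ≠ 0}, wt s k.1 * ‖u k.1‖ ^ 2)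

/-- The `(Ḣ^s)²` norm of a pair. -/
def hnorm2 (s : ℝ) (u v : ℤ → ℂ) : ℝ :=
  Real.sqrt (hnorm s u ^ 2 + hnorm s v ^ 2)

/-- The conserved energy functional `𝓔(u,v) = 2‖u‖² + 2‖v‖² + ‖u-v‖²` (in `Ḣ^0`). -/
def energyE (u v : ℤ → ℂ) : ℝ :=
  2 * hnorm 0 u ^ 2 + 2 * hnorm 0 v ^ 2 + hnorm 0 (fun k => u k - v k) ^ 2

/-- Projection `𝒫` onto the low Fourier modes `|k| ≤ N`. -/
def Plow (N : ℕ) (u : ℤ → ℂ) : ℤ → ℂ := fun k => if |k| ≤ (N : ℤ) then u k else 0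

/-- Projection `𝒬 = I - 𝒫` onto the high Fourier modes `|k| > N`. -/
def Qhigh (N : ℕ) (u : ℤ → ℂ) : ℤ → ℂ := fun k => if |k| ≤ (N : ℤ) then 0 else u k

/-- The oscillating factor `e^{3 i k k₁ k₂ t}` with `k₂ = k - k₁`. -/
def osc2 (t : ℝ) (k k1 : ℤ) : ℂ :=
  Complex.exp (3 * Complex.I * (k : ℂ) * (k1 : ℂ) * ((k - k1 : ℤ) : ℂ) * (t : ℂ))

/-- The oscillating factor `e^{3 i (k₁+k₂)(k₂+k₃)(k₁+k₃) t}`. -/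
def osc3 (t : ℝ) (k1 k2 k3 : ℤ) : ℂ :=
  Complex.exp (3 * Complex.I * ((k1 + k2 : ℤ) : ℂ) * ((k2 + k3 : ℤ) : ℂ) *
    ((k1 + k3 : ℤ) : ℂ) * (t : ℂ))

/-- The bilinear operator `B₁` at time `t`. -/
def B1 (t : ℝ) (φ ψ : ℤ → ℂ) : ℤ → ℂ := fun k =>
  Complex.I * (k : ℂ) / 2 *
    ∑' k1 : ℤ, if k1 ≠ 0 ∧ k - k1 ≠ 0 then osc2 t k k1 * φ k1 * ψ (k - k1) else 0

/-- The bilinear operator `B₂` at time `t`. -/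
def B2 (t : ℝ) (φ ψ : ℤ → ℂ) : ℤ → ℂ := fun k =>
  (1 / 6 : ℂ) *
    ∑' k1 : ℤ, if k1 ≠ 0 ∧ k - k1 ≠ 0 then
      osc2 t k k1 * φ k1 * ψ (k - k1) / ((k1 : ℂ) * ((k - k1 : ℤ) : ℂ)) else 0

/-- The trilinear operator `R₃` at time `t`. -/
def R3 (t : ℝ) (φ ψ ξ : ℤ → ℂ) : ℤ → ℂ := fun k =>
  ∑' p : ℤ × ℤ,
    if p.1 ≠ 0 ∧ p.2 ≠ 0 ∧ k - p.1 - p.2 ≠ 0 then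
      osc3 t p.1 p.2 (k - p.1 - p.2) * φ p.1 * ψ p.2 * ξ (k - p.1 - p.2) / (p.1 : ℂ)
    else 0

/-- The resonant part `R₃res` (sum over `(k₁+k₂)(k₂+k₃)(k₁+k₃) = 0`). -/
def R3res (φ ψ ξ : ℤ → ℂ) : ℤ → ℂ := fun k =>
  ∑' p : ℤ × ℤ,
    if p.1 ≠ 0 ∧ p.2 ≠ 0 ∧ k - p.1 - p.2 ≠ 0 ∧
        (p.1 + p.2) * (p.2 + (k - p.1 - p.2)) * (p.1 + (k - p.1 - p.2)) = 0 then
      φ p.1 * ψ p.2 * ξ (k - p.1 - p.2) / (p.1 : ℂ)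
    else 0

/-- The nonresonant part `R₃nres` (sum over `(k₁+k₂)(k₂+k₃)(k₁+k₃) ≠ 0`). -/
def R3nres (t : ℝ) (φ ψ ξ : ℤ → ℂ) : ℤ → ℂ := fun k =>
  ∑' p : ℤ × ℤ,
    if p.1 ≠ 0 ∧ p.2 ≠ 0 ∧ k - p.1 - p.2 ≠ 0 ∧
        (p.1 + p.2) * (p.2 + (k - p.1 - p.2)) * (p.1 + (k - p.1 - p.2)) ≠ 0 then
      osc3 t p.1 p.2 (k - p.1 - p.2) * φ p.1 * ψ p.2 * ξ (k - p.1 - p.2) / (p.1 : ℂ)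
    else 0

/-- The operator `R₃nres1(φ,ψ,ξ) = R₃nres(φ,𝒫ψ,ξ) + R₃nres(φ,𝒬ψ,𝒫ξ)`. -/
def R3nres1 (N : ℕ) (t : ℝ) (φ ψ ξ : ℤ → ℂ) : ℤ → ℂ := fun k =>
  R3nres t φ (Plow N ψ) ξ k + R3nres t φ (Qhigh N ψ) (Plow N ξ) k

/-- The trilinear operator `B₃` (nonresonant indices). -/
def B3 (t : ℝ) (φ ψ ξ : ℤ → ℂ) : ℤ → ℂ := fun k =>
  ∑' p : ℤ × ℤ,
    if p.1 ≠ 0 ∧ p.2 ≠ 0 ∧ k - p.1 - p.2 ≠ 0 ∧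
        (p.1 + p.2) * (p.2 + (k - p.1 - p.2)) * (p.1 + (k - p.1 - p.2)) ≠ 0 then
      osc3 t p.1 p.2 (k - p.1 - p.2) * φ p.1 * ψ p.2 * ξ (k - p.1 - p.2) /
        ((p.1 : ℂ) * ((p.1 + p.2 : ℤ) : ℂ) * ((p.2 + (k - p.1 - p.2) : ℤ) : ℂ) *
          ((p.1 + (k - p.1 - p.2) : ℤ) : ℂ))
    else 0

/-- The operator `B₃₀(φ,ψ,ξ) = B₃(φ,𝒬ψ,𝒬ξ)`. -/
def B30 (N : ℕ) (t : ℝ) (φ ψ ξ : ℤ → ℂ) : ℤ → ℂ :=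
  B3 t φ (Qhigh N ψ) (Qhigh N ξ)

/-- The phase `Φ(k₁,k₂,k₃,k₄) = (k₁+k₂+k₃+k₄)³ - k₁³ - k₂³ - k₃³ - k₄³`. -/
def Phi4 (k1 k2 k3 k4 : ℤ) : ℤ :=
  (k1 + k2 + k3 + k4) ^ 3 - k1 ^ 3 - k2 ^ 3 - k3 ^ 3 - k4 ^ 3

/-- The oscillating factor `e^{i Φ(k₁,k₂,k₃,k₄) t}`. -/
def osc4 (t : ℝ) (k1 k2 k3 k4 : ℤ) : ℂ :=
  Complex.exp (Complex.I * ((Phi4 k1 k2 k3 k4 : ℤ) : ℂ) * (t : ℂ))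

/-- The quadrilinear operator `B₄¹`. -/
def B41 (t : ℝ) (φ ψ ξ η : ℤ → ℂ) : ℤ → ℂ := fun k =>
  ∑' q : ℤ × ℤ × ℤ,
    let k1 := q.1; let k2 := q.2.1; let k3 := q.2.2; let k4 := k - k1 - k2 - k3
    if k1 ≠ 0 ∧ k2 ≠ 0 ∧ k3 ≠ 0 ∧ k4 ≠ 0 ∧
        (k1 + k2) * (k1 + k3 + k4) * (k2 + k3 + k4) ≠ 0 then
      osc4 t k1 k2 k3 k4 * φ k1 * ψ k2 * ξ k3 * η k4 /
        (((k1 + k2 : ℤ) : ℂ) * ((k1 + k3 + k4 : ℤ) : ℂ) * ((k2 + k3 + k4 : ℤ) : ℂ))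
    else 0

/-- The quadrilinear operator `B₄²`. -/
def B42 (t : ℝ) (φ ψ ξ η : ℤ → ℂ) : ℤ → ℂ := fun k =>
  ∑' q : ℤ × ℤ × ℤ,
    let k1 := q.1; let k2 := q.2.1; let k3 := q.2.2; let k4 := k - k1 - k2 - k3
    if k1 ≠ 0 ∧ k2 ≠ 0 ∧ k3 ≠ 0 ∧ k4 ≠ 0 ∧
        (k1 + k2) * (k1 + k3 + k4) * (k2 + k3 + k4) ≠ 0 then
      osc4 t k1 k2 k3 k4 * ((k3 + k4 : ℤ) : ℂ) * φ k1 * ψ k2 * ξ k3 * η k4 /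
        ((k1 : ℂ) * ((k1 + k2 : ℤ) : ℂ) * ((k1 + k3 + k4 : ℤ) : ℂ) *
          ((k2 + k3 + k4 : ℤ) : ℂ))
    else 0

/-- The quadrilinear operator `B₄ = B₄¹ + B₄²`. -/
def B4 (t : ℝ) (φ ψ ξ η : ℤ → ℂ) : ℤ → ℂ := fun k =>
  B41 t φ ψ ξ η k + B42 t φ ψ ξ η k

/-- Right-hand side (before the `ik/2` factor and integration) of the `u`-equation
of the transformed Majda–Biello system. -/
def mbRHSu (u v : ℝ → ℤ → ℂ) (τ : ℝ) (k : ℤ) : ℂ :=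
  ∑' k1 : ℤ, if k1 ≠ 0 ∧ k - k1 ≠ 0 then
    osc2 τ k k1 * (u τ k1 * v τ (k - k1) - u τ k1 * u τ (k - k1)) else 0

/-- Right-hand side (before the `ik/2` factor and integration) of the `v`-equation
of the transformed Majda–Biello system. -/
def mbRHSv (u v : ℝ → ℤ → ℂ) (τ : ℝ) (k : ℤ) : ℂ :=
  ∑' k1 : ℤ, if k1 ≠ 0 ∧ k - k1 ≠ 0 then
    osc2 τ k k1 * (u τ k1 * v τ (k - k1) - v τ k1 * v τ (k - k1)) else 0

/-- `(u,v)` is a solution of the transformed Majda–Biello system on `[0,T]`: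
it belongs to `L^∞([0,T];(Ḣ^0)²)` and satisfies the integrated equations. -/
def IsMBSolution (T : ℝ) (u v : ℝ → ℤ → ℂ) : Prop :=
  (∃ M : ℝ, ∀ t ∈ Icc (0 : ℝ) T,
      memH 0 (u t) ∧ memH 0 (v t) ∧ hnorm2 0 (u t) (v t) ≤ M) ∧
  ∀ k : ℤ, k ≠ 0 → ∀ t ∈ Icc (0 : ℝ) T,
    (u t k - u 0 k = Complex.I * (k : ℂ) / 2 * (∫ τ in (0 : ℝ)..t, mbRHSu u v τ k)) ∧
    (v t k - v 0 k = Complex.I * (k : ℂ) / 2 * (∫ τ in (0 : ℝ)..t, mbRHSv u v τ k))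

/-- The (finite) right-hand side of the `u`-equation of the `N`-th Galerkin system. -/
def galRHSu (N : ℕ) (t : ℝ) (f g : ℤ → ℂ) (k : ℤ) : ℂ :=
  Complex.I * (k : ℂ) / 2 * ∑ k1 ∈ Finset.Icc (-(N : ℤ)) (N : ℤ),
    (if k1 ≠ 0 ∧ k - k1 ≠ 0 ∧ |k - k1| ≤ (N : ℤ) then
      osc2 t k k1 * (f k1 * g (k - k1) - f k1 * f (k - k1)) else 0)

/-- The (finite) right-hand side of the `v`-equation of the `N`-th Galerkin system. -/
def galRHSv (N : ℕ) (t : ℝ) (f g : ℤ → ℂ) (k : ℤ) : ℂ :=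
  Complex.I * (k : ℂ) / 2 * ∑ k1 ∈ Finset.Icc (-(N : ℤ)) (N : ℤ),
    (if k1 ≠ 0 ∧ k - k1 ≠ 0 ∧ |k - k1| ≤ (N : ℤ) then
      osc2 t k k1 * (f k1 * g (k - k1) - g k1 * g (k - k1)) else 0)

/-- `(u,v)` solves the `N`-th Galerkin system on the set `S` with initial data
`(uin, vin)`. -/
def IsGalerkinSolution (N : ℕ) (uin vin : ℤ → ℂ) (S : Set ℝ) (u v : ℝ → ℤ → ℂ) : Prop :=
  (∀ k : ℤ, k ≠ 0 → u 0 k = uin k ∧ v 0 k = vin k) ∧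
  ∀ t ∈ S, ∀ k : ℤ, k ≠ 0 →
    HasDerivWithinAt (fun τ : ℝ => u τ k)
      (if |k| ≤ (N : ℤ) then galRHSu N t (u t) (v t) k else 0) S t ∧
    HasDerivWithinAt (fun τ : ℝ => v τ k)
      (if |k| ≤ (N : ℤ) then galRHSv N t (u t) (v t) k else 0) S t

attribute [local instance] Classical.propDecidable

/-- The operator `R₃` restricted to an arbitrary index set `𝒟`. -/
def R3D (D : Set (ℤ × ℤ × ℤ)) (t : ℝ) (φ ψ ξ : ℤ → ℂ) : ℤ → ℂ := fun k =>
  ∑' p : ℤ × ℤ,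
    if p.1 ≠ 0 ∧ p.2 ≠ 0 ∧ k - p.1 - p.2 ≠ 0 ∧ (p.1, p.2, k - p.1 - p.2) ∈ D then
      osc3 t p.1 p.2 (k - p.1 - p.2) * φ p.1 * ψ p.2 * ξ (k - p.1 - p.2) / (p.1 : ℂ)
    else 0

/-! ### Auxiliary material for the proof of the trilinear estimate -/

section R3EstimateAux

open ENNReal MeasureTheory
open scoped NNReal

/-- `|n|` as an extended nonnegative real. -/
def naE (n : ℤ) : ℝ≥0∞ := (n.natAbs : ℝ≥0∞)

lemma naE_ne_top (n : ℤ) : naE n ≠ ⊤ := by simp [naE]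

lemma naE_ne_zero {n : ℤ} (h : n ≠ 0) : naE n ≠ 0 := by
  simp [naE, Int.natAbs_eq_zero, h]

lemma one_le_naE {n : ℤ} (h : n ≠ 0) : 1 ≤ naE n := by
  have h1 : 1 ≤ n.natAbs := Nat.one_le_iff_ne_zero.mpr (by simpa [Int.natAbs_eq_zero] using h)
  exact_mod_cast Nat.one_le_cast.mpr h1

lemma naE_rpow_mul {n : ℤ} (h : n ≠ 0) (α β : ℝ) :
    naE n ^ α * naE n ^ β = naE n ^ (α + β) :=
  (ENNReal.rpow_add α β (naE_ne_zero h) (naE_ne_top n)).symm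

lemma naE_rpow_neg_le_one {n : ℤ} (h : n ≠ 0) {θ : ℝ} (hθ : 0 ≤ θ) : naE n ^ (-θ) ≤ 1 := by
  rw [ENNReal.rpow_neg]
  refine ENNReal.inv_le_one.mpr ?_
  calc (1:ℝ≥0∞) = 1 ^ θ := (ENNReal.one_rpow θ).symm
    _ ≤ naE n ^ θ := ENNReal.rpow_le_rpow (one_le_naE h) hθ

lemma rpow_nat_sq (x : ℝ≥0∞) (θ : ℝ) : (x ^ θ) ^ (2:ℕ) = x ^ (2 * θ) := by
  rw [← ENNReal.rpow_natCast (x ^ θ) 2, ← ENNReal.rpow_mul]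
  norm_num [mul_comm]

lemma nnnorm_osc3 (t : ℝ) (k1 k2 k3 : ℤ) : ‖osc3 t k1 k2 k3‖₊ = 1 := by
  have h : ‖osc3 t k1 k2 k3‖ = 1 := by
    rw [osc3, Complex.norm_exp]
    norm_num [Complex.mul_re, Complex.mul_im]
  ext; simpa using h

lemma enn_intCast_nnnorm (n : ℤ) : (‖((n:ℤ):ℂ)‖₊ : ℝ≥0∞) = naE n := by
  rw [← enorm_eq_nnnorm, ← ofReal_norm]
  have h : ‖((n:ℤ):ℂ)‖ = (n.natAbs : ℝ) := by
    rw [Complex.norm_intCast, Nat.cast_natAbs, Int.cast_abs]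
  rw [h, naE, ENNReal.ofReal_natCast]

lemma coe_nnnorm_tsum_le {ι : Type*} (f : ι → ℂ) :
    (‖∑' i, f i‖₊ : ℝ≥0∞) ≤ ∑' i, (‖f i‖₊ : ℝ≥0∞) := by
  by_cases h : Summable f
  · have hn : Summable (fun i => ‖f i‖₊) := by
      rw [← NNReal.summable_coe]
      exact summable_norm_iff.mpr h
    rw [← ENNReal.coe_tsum hn]
    have key : ‖∑' i, f i‖₊ ≤ ∑' i, ‖f i‖₊ := by
      have hr := norm_tsum_le_tsum_norm (f := f) (summable_norm_iff.mpr h)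
      rw [← NNReal.coe_le_coe, coe_nnnorm, NNReal.coe_tsum]
      exact hr
    exact_mod_cast key
  · rw [tsum_eq_zero_of_not_summable h]; simp

lemma conj22 : Real.HolderConjugate 2 2 := Real.HolderConjugate.two_two

lemma tsum_CS_sq {ι : Type*} [MeasurableSpace ι] [MeasurableSingletonClass ι] [Countable ι]
    (X Y : ι → ℝ≥0∞) :
    (∑' i, X i * Y i) ^ (2:ℕ) ≤ (∑' i, X i ^ (2:ℕ)) * (∑' i, Y i ^ (2:ℕ)) := by
  have h := ENNReal.lintegral_mul_le_Lp_mul_Lq (Measure.count (α := ι))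
    conj22 (f := X) (g := Y)
    (measurable_of_countable X).aemeasurable (measurable_of_countable Y).aemeasurable
  simp only [lintegral_count, Pi.mul_apply] at h
  calc (∑' i, X i * Y i) ^ (2:ℕ)
      ≤ ((∑' i, X i ^ (2:ℝ)) ^ (1/2:ℝ) * (∑' i, Y i ^ (2:ℝ)) ^ (1/2:ℝ)) ^ (2:ℕ) :=
        pow_le_pow_left₀ (zero_le) h 2
    _ = (∑' i, X i ^ (2:ℝ)) * (∑' i, Y i ^ (2:ℝ)) := by
        rw [mul_pow, ← ENNReal.rpow_natCast (_ ^ (1/2:ℝ)) 2, ← ENNReal.rpow_natCast (_ ^ (1/2:ℝ)) 2,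
          ← ENNReal.rpow_mul, ← ENNReal.rpow_mul]
        norm_num
    _ = (∑' i, X i ^ (2:ℕ)) * (∑' i, Y i ^ (2:ℕ)) := by
        congr 1 <;> exact tsum_congr fun i => by
          rw [← ENNReal.rpow_natCast _ 2]; norm_num

lemma summable_iff_ofReal_ne_top {ι : Type*} (f : ι → ℝ) (hf : ∀ i, 0 ≤ f i) :
    Summable f ↔ ∑' i, ENNReal.ofReal (f i) ≠ ⊤ := by
  set g : ι → ℝ≥0 := fun i => ⟨f i, hf i⟩ with hg
  have hco : ∀ i, ENNReal.ofReal (f i) = (g i : ℝ≥0∞) := fun i =>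
    ENNReal.ofReal_eq_coe_nnreal (hf i)
  have hfg : ∀ i, (g i : ℝ) = f i := fun i => rfl
  rw [tsum_congr hco, ENNReal.tsum_coe_ne_top_iff_summable, ← NNReal.summable_coe]
  exact Iff.of_eq (congrArg (fun h : ι → ℝ => Summable h) (funext fun i => (hfg i).symm))

lemma tsum_eq_toReal {ι : Type*} (f : ι → ℝ) (hf : ∀ i, 0 ≤ f i) (h : Summable f) :
    ∑' i, f i = (∑' i, ENNReal.ofReal (f i)).toReal := by
  rw [← ENNReal.ofReal_tsum_of_nonneg hf h, ENNReal.toReal_ofReal (tsum_nonneg hf)]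

/-- The `zeta`-type weight. -/
def zfE (θ : ℝ) (n : ℤ) : ℝ≥0∞ := if n = 0 then 0 else naE n ^ (-θ)

/-- The `zeta`-type series. -/
def zetE (θ : ℝ) : ℝ≥0∞ := ∑' n : ℤ, zfE θ n

lemma zetE_ne_top {θ : ℝ} (hθ : 1 < θ) : zetE θ ≠ ⊤ := by
  have hsum : Summable fun n : ℤ => |(n:ℝ)| ^ (-θ) := Real.summable_abs_int_rpow hθ
  have hnn : ∀ n : ℤ, 0 ≤ |(n:ℝ)| ^ (-θ) := fun n => Real.rpow_nonneg (abs_nonneg _) _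
  have h := (summable_iff_ofReal_ne_top _ hnn).mp hsum
  refine ne_top_of_le_ne_top h (Summable.tsum_le_tsum (fun n => ?_) ENNReal.summable ENNReal.summable)
  by_cases hn : n = 0
  · simp [zfE, hn]
  · rw [zfE, if_neg hn]
    have habs : |(n:ℝ)| = (n.natAbs:ℝ) := by rw [Nat.cast_natAbs, Int.cast_abs]
    rw [habs, ← ENNReal.ofReal_rpow_of_pos (by positivity), ENNReal.ofReal_natCast]
    exact le_of_eq rfl

lemma naE_triangle (k1 k2 k3 : ℤ) : naE (k1+k2+k3) ≤ naE k1 + naE k2 + naE k3 := by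
  have h : (k1+k2+k3).natAbs ≤ k1.natAbs + k2.natAbs + k3.natAbs :=
    le_trans (Int.natAbs_add_le _ _) (Nat.add_le_add_right (Int.natAbs_add_le _ _) _)
  simp only [naE]
  exact_mod_cast Nat.cast_le.mpr h

lemma naE_pow_bound {s : ℝ} (hs : 0 ≤ s) (k1 k2 k3 : ℤ) :
    naE (k1+k2+k3) ^ (2*s) ≤ (9:ℝ≥0∞)^s * (naE k1 ^ (2*s) + naE k2 ^ (2*s) + naE k3 ^ (2*s)) := by
  set M := max (naE k1) (max (naE k2) (naE k3)) with hM
  have h2s : (0:ℝ) ≤ 2*s := by linarith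
  have hmono : Monotone (fun x : ℝ≥0∞ => x ^ (2*s)) := fun a b hab => ENNReal.rpow_le_rpow hab h2s
  have h1 : naE (k1+k2+k3) ≤ 3 * M := by
    refine (naE_triangle k1 k2 k3).trans ?_
    have ha : naE k1 ≤ M := le_max_left _ _
    have h2 : naE k2 ≤ M := le_trans (le_max_left _ _) (le_max_right _ _)
    have h3 : naE k3 ≤ M := le_trans (le_max_right _ _) (le_max_right _ _)
    calc naE k1 + naE k2 + naE k3 ≤ M + M + M := by gcongr
      _ = 3 * M := by ring
  have hMle : M ^ (2*s) ≤ naE k1 ^ (2*s) + naE k2 ^ (2*s) + naE k3 ^ (2*s) := by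
    rw [hM, hmono.map_max, hmono.map_max]
    exact sup_le (le_add_of_le_of_nonneg (le_add_of_le_of_nonneg le_rfl (zero_le)) (zero_le))
      (sup_le (le_add_of_le_of_nonneg (le_add_of_nonneg_of_le (zero_le) le_rfl) (zero_le))
        (le_add_of_nonneg_left (zero_le)))
  calc naE (k1+k2+k3) ^ (2*s) ≤ (3*M) ^ (2*s) := ENNReal.rpow_le_rpow h1 h2s
    _ = (3:ℝ≥0∞)^(2*s) * M^(2*s) := ENNReal.mul_rpow_of_nonneg _ _ h2s
    _ = (9:ℝ≥0∞)^s * M^(2*s) := by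
        congr 1
        rw [show (2*s) = (2:ℝ)*s by ring, ENNReal.rpow_mul]
        congr 1
        rw [show (2:ℝ) = ((2:ℕ):ℝ) by norm_num, ENNReal.rpow_natCast]; norm_num
    _ ≤ _ := by gcongr

lemma tsum_prod_mul (f g : ℤ → ℝ≥0∞) :
    ∑' p : ℤ×ℤ, f p.1 * g p.2 = (∑' n, f n) * (∑' n, g n) := by
  rw [ENNReal.tsum_prod (f := fun a b => f a * g b)]
  calc ∑' (a : ℤ), ∑' (b : ℤ), f a * g b = ∑' (a : ℤ), f a * ∑' (b:ℤ), g b :=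
        tsum_congr fun a => ENNReal.tsum_mul_left
    _ = _ := ENNReal.tsum_mul_right

lemma tsum_shift (g : ℤ → ℝ≥0∞) (c : ℤ) : ∑' n : ℤ, g (c - n) = ∑' n, g n :=
  (Equiv.subLeft c).tsum_eq g

lemma tsum_shift' (g : ℤ → ℝ≥0∞) (c : ℤ) : ∑' n : ℤ, g (n - c) = ∑' n, g n :=
  (Equiv.subRight c).tsum_eq g

/-- The weighted sequence `|n|^s ‖u n‖` as an `ℝ≥0∞`-valued function. -/
def wAE (s : ℝ) (u : ℤ → ℂ) (n : ℤ) : ℝ≥0∞ :=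
  if n = 0 then 0 else naE n ^ s * (‖u n‖₊ : ℝ≥0∞)

lemma wt_nonneg (s : ℝ) (k : ℤ) : 0 ≤ wt s k :=
  Real.rpow_nonneg (by exact_mod_cast abs_nonneg k) _

lemma ofReal_wt_eq (s : ℝ) (u : ℤ → ℂ) {k : ℤ} (hk : k ≠ 0) :
    ENNReal.ofReal (wt s k * ‖u k‖ ^ 2) = wAE s u k ^ (2:ℕ) := by
  have hx : ((|k| : ℤ) : ℝ) = (k.natAbs : ℝ) := by
    rw [Nat.cast_natAbs, Int.cast_abs]
  have hpos : (0:ℝ) < (k.natAbs : ℝ) := by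
    have : k.natAbs ≠ 0 := by simpa [Int.natAbs_eq_zero] using hk
    positivity
  rw [wt, hx, ENNReal.ofReal_mul (Real.rpow_nonneg hpos.le _),
    ← ENNReal.ofReal_rpow_of_pos hpos, ENNReal.ofReal_natCast,
    ENNReal.ofReal_pow (norm_nonneg _), ofReal_norm, enorm_eq_nnnorm,
    wAE, if_neg hk, mul_pow, rpow_nat_sq]
  rfl

lemma tsum_wAE_sq (s : ℝ) (u : ℤ → ℂ) :
    ∑' k : {k : ℤ // k ≠ 0}, ENNReal.ofReal (wt s k.1 * ‖u k.1‖ ^ 2) =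
      ∑' n : ℤ, wAE s u n ^ (2:ℕ) := by
  have hsupp : Function.support (fun n : ℤ => wAE s u n ^ (2:ℕ)) ⊆ {k : ℤ | k ≠ 0} := by
    intro n hn
    simp only [Function.mem_support] at hn
    intro h0
    apply hn
    simp [wAE, h0]
  have h := tsum_subtype_eq_of_support_subset hsupp
  refine Eq.trans ?_ h
  exact tsum_congr fun k => ofReal_wt_eq s u k.2

lemma memH_iff_ne_top (s : ℝ) (u : ℤ → ℂ) :
    memH s u ↔ ∑' n : ℤ, wAE s u n ^ (2:ℕ) ≠ ⊤ := by
  have h := summable_iff_ofReal_ne_top (fun k : {k : ℤ // k ≠ 0} => wt s k.1 * ‖u k.1‖ ^ 2)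
    (fun k => mul_nonneg (wt_nonneg s k.1) (sq_nonneg _))
  rw [tsum_wAE_sq] at h
  exact h

lemma hnorm_eq (s : ℝ) (u : ℤ → ℂ) (h : memH s u) :
    hnorm s u = Real.sqrt ((∑' n : ℤ, wAE s u n ^ (2:ℕ)).toReal) := by
  have h2 := tsum_eq_toReal (fun k : {k : ℤ // k ≠ 0} => wt s k.1 * ‖u k.1‖ ^ 2)
    (fun k => mul_nonneg (wt_nonneg s k.1) (sq_nonneg _)) h
  rw [tsum_wAE_sq] at h2
  rw [hnorm, h2]

lemma sqrt_toReal_mul4 (a b c d : ℝ≥0∞) :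
    Real.sqrt ((a * (b * c * d)).toReal) =
      Real.sqrt a.toReal * Real.sqrt b.toReal * Real.sqrt c.toReal * Real.sqrt d.toReal := by
  rw [ENNReal.toReal_mul, ENNReal.toReal_mul, ENNReal.toReal_mul,
    Real.sqrt_mul ENNReal.toReal_nonneg,
    Real.sqrt_mul (mul_nonneg ENNReal.toReal_nonneg ENNReal.toReal_nonneg),
    Real.sqrt_mul ENNReal.toReal_nonneg]
  ring

end R3EstimateAux


open ENNReal MeasureTheory
open scoped NNReal


/-- Trilinear estimate for `R₃` restricted to an arbitrary
index set, uniformly in the index set and in time. -/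
theorem r3_restricted_estimate (s : ℝ) (hs : 1 / 2 < s) :
    ∃ C : ℝ, ∀ D : Set (ℤ × ℤ × ℤ), ∀ t : ℝ, ∀ φ ψ ξ : ℤ → ℂ,
      memH s φ → memH s ψ → memH s ξ →
      memH s (R3D D t φ ψ ξ) ∧
      hnorm s (R3D D t φ ψ ξ) ≤ C * hnorm s φ * hnorm s ψ * hnorm s ξ := by
  have hs0 : (0:ℝ) < s := by linarith
  have h2s : (1:ℝ) < 2*s := by linarith
  have h22s : (1:ℝ) < 2+2*s := by linarith
  set K : ℝ≥0∞ := (9:ℝ≥0∞)^s *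
    (zetE 2 * zetE (2*s) + zetE (2+2*s) * zetE (2*s) + zetE (2+2*s) * zetE (2*s)) with hKdef
  have z1 := zetE_ne_top (by norm_num : (1:ℝ) < 2)
  have z2 := zetE_ne_top h2s
  have z3 := zetE_ne_top h22s
  have hKtop : K ≠ ⊤ := by
    rw [hKdef]
    exact ENNReal.mul_ne_top (ENNReal.rpow_ne_top_of_nonneg hs0.le (by norm_num))
      (ENNReal.add_ne_top.mpr ⟨ENNReal.add_ne_top.mpr
        ⟨ENNReal.mul_ne_top z1 z2, ENNReal.mul_ne_top z3 z2⟩, ENNReal.mul_ne_top z3 z2⟩)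
  refine ⟨Real.sqrt K.toReal, fun D t φ ψ ξ hφ hψ hξ => ?_⟩
  have hSA : ∑' n : ℤ, wAE s φ n ^ (2:ℕ) ≠ ⊤ := (memH_iff_ne_top s φ).mp hφ
  have hSB : ∑' n : ℤ, wAE s ψ n ^ (2:ℕ) ≠ ⊤ := (memH_iff_ne_top s ψ).mp hψ
  have hSC : ∑' n : ℤ, wAE s ξ n ^ (2:ℕ) ≠ ⊤ := (memH_iff_ne_top s ξ).mp hξ
  -- the key pointwise (in `k`) bound
  have key : ∀ k : ℤ, wAE s (R3D D t φ ψ ξ) k ^ (2:ℕ) ≤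
      K * ∑' p : ℤ×ℤ, wAE s φ p.1 ^ (2:ℕ) * wAE s ψ p.2 ^ (2:ℕ) *
        wAE s ξ (k - p.1 - p.2) ^ (2:ℕ) := by
    intro k
    by_cases hk : k = 0
    · have : wAE s (R3D D t φ ψ ξ) k = 0 := by simp [wAE, hk]
      rw [this]
      simpa using zero_le
    · set X : ℤ×ℤ → ℝ≥0∞ := fun p =>
        if p.1 ≠ 0 ∧ p.2 ≠ 0 ∧ k - p.1 - p.2 ≠ 0 then
          naE k ^ s * naE p.1 ^ (-(1+s)) * naE p.2 ^ (-s) * naE (k-p.1-p.2) ^ (-s)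
        else 0 with hX
      set Y : ℤ×ℤ → ℝ≥0∞ := fun p =>
        wAE s φ p.1 * wAE s ψ p.2 * wAE s ξ (k - p.1 - p.2) with hY
      have step1 : wAE s (R3D D t φ ψ ξ) k ≤ ∑' p : ℤ×ℤ, X p * Y p := by
        rw [wAE, if_neg hk]
        simp only [R3D]
        refine le_trans (mul_le_mul_right (coe_nnnorm_tsum_le _) _) ?_
        rw [← ENNReal.tsum_mul_left]
        refine Summable.tsum_le_tsum (fun p => ?_) ENNReal.summable ENNReal.summable
        by_cases hc : p.1 ≠ 0 ∧ p.2 ≠ 0 ∧ k - p.1 - p.2 ≠ 0 ∧ (p.1, p.2, k - p.1 - p.2) ∈ D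
        · rw [if_pos hc]
          obtain ⟨h1, h2, h3, _⟩ := hc
          have hne : ‖((p.1:ℤ):ℂ)‖₊ ≠ 0 :=
            nnnorm_ne_zero_iff.mpr (Int.cast_ne_zero.mpr h1)
          have hnn : (‖osc3 t p.1 p.2 (k-p.1-p.2) * φ p.1 * ψ p.2 * ξ (k-p.1-p.2) /
              ((p.1:ℤ):ℂ)‖₊ : ℝ≥0∞) =
              (‖φ p.1‖₊ : ℝ≥0∞) * (‖ψ p.2‖₊ : ℝ≥0∞) * (‖ξ (k-p.1-p.2)‖₊ : ℝ≥0∞) *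
                (naE p.1)⁻¹ := by
            rw [div_eq_mul_inv]
            simp only [nnnorm_mul, nnnorm_inv, nnnorm_osc3, one_mul, ENNReal.coe_mul,
              ENNReal.coe_inv hne, enn_intCast_nnnorm]
          rw [hnn]
          have e1 : naE p.1 ^ (-(1+s)) * naE p.1 ^ s = (naE p.1)⁻¹ := by
            rw [naE_rpow_mul h1, show (-(1+s) + s) = (-1 : ℝ) by ring, ENNReal.rpow_neg_one]
          have e2 : naE p.2 ^ (-s) * naE p.2 ^ s = 1 := by
            rw [naE_rpow_mul h2, show (-s + s) = (0:ℝ) by ring, ENNReal.rpow_zero]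
          have e3 : naE (k-p.1-p.2) ^ (-s) * naE (k-p.1-p.2) ^ s = 1 := by
            rw [naE_rpow_mul h3, show (-s + s) = (0:ℝ) by ring, ENNReal.rpow_zero]
          have hXp : X p = naE k ^ s * naE p.1 ^ (-(1+s)) * naE p.2 ^ (-s) *
              naE (k-p.1-p.2) ^ (-s) := by
            rw [hX]; exact if_pos ⟨h1, h2, h3⟩
          have hYp : Y p = (naE p.1 ^ s * (‖φ p.1‖₊ : ℝ≥0∞)) *
              (naE p.2 ^ s * (‖ψ p.2‖₊ : ℝ≥0∞)) *
              (naE (k-p.1-p.2) ^ s * (‖ξ (k-p.1-p.2)‖₊ : ℝ≥0∞)) := by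
            rw [hY]
            simp only [wAE, if_neg h1, if_neg h2, if_neg h3]
          refine le_of_eq ?_
          rw [hXp, hYp]
          calc naE k ^ s * ((‖φ p.1‖₊:ℝ≥0∞) * (‖ψ p.2‖₊:ℝ≥0∞) * (‖ξ (k-p.1-p.2)‖₊:ℝ≥0∞) *
                (naE p.1)⁻¹)
              = (naE p.1 ^ (-(1+s)) * naE p.1 ^ s) * ((naE p.2 ^ (-s) * naE p.2 ^ s) *
                ((naE (k-p.1-p.2) ^ (-s) * naE (k-p.1-p.2) ^ s) *
                  (naE k ^ s * ((‖φ p.1‖₊:ℝ≥0∞) * (‖ψ p.2‖₊:ℝ≥0∞) *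
                    (‖ξ (k-p.1-p.2)‖₊:ℝ≥0∞))))) := by rw [e1, e2, e3]; ring
            _ = _ := by ring
        · rw [if_neg hc]
          simp only [nnnorm_zero, ENNReal.coe_zero, mul_zero]
          exact zero_le
      have step2 : (∑' p : ℤ×ℤ, X p * Y p) ^ (2:ℕ) ≤
          (∑' p : ℤ×ℤ, X p ^ (2:ℕ)) * (∑' p : ℤ×ℤ, Y p ^ (2:ℕ)) := tsum_CS_sq X Y
      have step3 : ∑' p : ℤ×ℤ, X p ^ (2:ℕ) ≤ K := by
        have hXp : ∀ p : ℤ×ℤ, X p ^ (2:ℕ) ≤ (9:ℝ≥0∞)^s *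
            (zfE 2 p.1 * zfE (2*s) p.2 + zfE (2+2*s) p.1 * zfE (2*s) (k-p.1-p.2) +
              zfE (2+2*s) p.1 * zfE (2*s) p.2) := by
          intro p
          by_cases hc : p.1 ≠ 0 ∧ p.2 ≠ 0 ∧ k - p.1 - p.2 ≠ 0
          · obtain ⟨h1, h2, h3⟩ := hc
            have hXv : X p = naE k ^ s * naE p.1 ^ (-(1+s)) * naE p.2 ^ (-s) *
                naE (k-p.1-p.2) ^ (-s) := by
              rw [hX]; exact if_pos ⟨h1, h2, h3⟩
            rw [hXv, mul_pow, mul_pow, mul_pow, rpow_nat_sq, rpow_nat_sq, rpow_nat_sq,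
              rpow_nat_sq, show 2 * -(1+s) = -(2+2*s) by ring, show 2 * -s = -(2*s) by ring]
            have hb : naE k ^ (2*s) ≤ (9:ℝ≥0∞)^s *
                (naE p.1 ^ (2*s) + naE p.2 ^ (2*s) + naE (k-p.1-p.2) ^ (2*s)) := by
              have hb0 := naE_pow_bound hs0.le p.1 p.2 (k-p.1-p.2)
              rwa [show p.1 + p.2 + (k-p.1-p.2) = k by ring] at hb0
            have hu1 : naE p.1 ^ (2*s) * (naE p.1 ^ (-(2+2*s)) * naE p.2 ^ (-(2*s)) * naE (k-p.1-p.2) ^ (-(2*s))) ≤ zfE 2 p.1 * zfE (2*s) p.2 := by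
              calc naE p.1 ^ (2*s) * (naE p.1 ^ (-(2+2*s)) * naE p.2 ^ (-(2*s)) * naE (k-p.1-p.2) ^ (-(2*s))) = (naE p.1 ^ (2*s) * naE p.1 ^ (-(2+2*s))) * naE p.2 ^ (-(2*s)) * naE (k-p.1-p.2) ^ (-(2*s)) := by ring
                _ = naE p.1 ^ (-(2:ℝ)) * naE p.2 ^ (-(2*s)) * naE (k-p.1-p.2) ^ (-(2*s)) := by rw [naE_rpow_mul h1, show 2*s + -(2+2*s) = -(2:ℝ) by ring]
                _ ≤ naE p.1 ^ (-(2:ℝ)) * naE p.2 ^ (-(2*s)) * 1 := by gcongr; exact naE_rpow_neg_le_one h3 (by linarith)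
                _ = zfE 2 p.1 * zfE (2*s) p.2 := by rw [mul_one, zfE, if_neg h1, zfE, if_neg h2]
            have hu2 : naE p.2 ^ (2*s) * (naE p.1 ^ (-(2+2*s)) * naE p.2 ^ (-(2*s)) * naE (k-p.1-p.2) ^ (-(2*s))) ≤ zfE (2+2*s) p.1 * zfE (2*s) (k-p.1-p.2) := by
              refine le_of_eq ?_
              calc naE p.2 ^ (2*s) * (naE p.1 ^ (-(2+2*s)) * naE p.2 ^ (-(2*s)) * naE (k-p.1-p.2) ^ (-(2*s))) = (naE p.2 ^ (2*s) * naE p.2 ^ (-(2*s))) * (naE p.1 ^ (-(2+2*s)) * naE (k-p.1-p.2) ^ (-(2*s))) := by ring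
                _ = zfE (2+2*s) p.1 * zfE (2*s) (k-p.1-p.2) := by
                    rw [naE_rpow_mul h2, show 2*s + -(2*s) = (0:ℝ) by ring, ENNReal.rpow_zero,
                      one_mul, zfE, if_neg h1, zfE, if_neg h3]
            have hu3 : naE (k-p.1-p.2) ^ (2*s) * (naE p.1 ^ (-(2+2*s)) * naE p.2 ^ (-(2*s)) * naE (k-p.1-p.2) ^ (-(2*s))) ≤ zfE (2+2*s) p.1 * zfE (2*s) p.2 := by
              refine le_of_eq ?_
              calc naE (k-p.1-p.2) ^ (2*s) * (naE p.1 ^ (-(2+2*s)) * naE p.2 ^ (-(2*s)) * naE (k-p.1-p.2) ^ (-(2*s))) = (naE (k-p.1-p.2) ^ (2*s) * naE (k-p.1-p.2) ^ (-(2*s))) * (naE p.1 ^ (-(2+2*s)) * naE p.2 ^ (-(2*s))) := by ring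
                _ = zfE (2+2*s) p.1 * zfE (2*s) p.2 := by
                    rw [naE_rpow_mul h3, show 2*s + -(2*s) = (0:ℝ) by ring, ENNReal.rpow_zero,
                      one_mul, zfE, if_neg h1, zfE, if_neg h2]
            calc naE k ^ (2*s) * naE p.1 ^ (-(2+2*s)) * naE p.2 ^ (-(2*s)) * naE (k-p.1-p.2) ^ (-(2*s)) = naE k ^ (2*s) * (naE p.1 ^ (-(2+2*s)) * naE p.2 ^ (-(2*s)) * naE (k-p.1-p.2) ^ (-(2*s))) := by ring
              _ ≤ ((9:ℝ≥0∞)^s * (naE p.1 ^ (2*s) + naE p.2 ^ (2*s) + naE (k-p.1-p.2) ^ (2*s))) * (naE p.1 ^ (-(2+2*s)) * naE p.2 ^ (-(2*s)) * naE (k-p.1-p.2) ^ (-(2*s))) := mul_le_mul_left hb _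
              _ = (9:ℝ≥0∞)^s * (naE p.1 ^ (2*s) * (naE p.1 ^ (-(2+2*s)) * naE p.2 ^ (-(2*s)) * naE (k-p.1-p.2) ^ (-(2*s))) + naE p.2 ^ (2*s) * (naE p.1 ^ (-(2+2*s)) * naE p.2 ^ (-(2*s)) * naE (k-p.1-p.2) ^ (-(2*s))) + naE (k-p.1-p.2) ^ (2*s) * (naE p.1 ^ (-(2+2*s)) * naE p.2 ^ (-(2*s)) * naE (k-p.1-p.2) ^ (-(2*s)))) := by ring
              _ ≤ _ := mul_le_mul_right (add_le_add (add_le_add hu1 hu2) hu3) _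
          · have : X p = 0 := by rw [hX]; exact if_neg hc
            rw [this]
            simpa using zero_le
        calc ∑' p : ℤ×ℤ, X p ^ (2:ℕ)
            ≤ ∑' p : ℤ×ℤ, (9:ℝ≥0∞)^s *
              (zfE 2 p.1 * zfE (2*s) p.2 + zfE (2+2*s) p.1 * zfE (2*s) (k-p.1-p.2) +
                zfE (2+2*s) p.1 * zfE (2*s) p.2) :=
              Summable.tsum_le_tsum hXp ENNReal.summable ENNReal.summable
          _ = (9:ℝ≥0∞)^s * ((∑' p : ℤ×ℤ, zfE 2 p.1 * zfE (2*s) p.2) +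
              (∑' p : ℤ×ℤ, zfE (2+2*s) p.1 * zfE (2*s) (k-p.1-p.2)) +
              (∑' p : ℤ×ℤ, zfE (2+2*s) p.1 * zfE (2*s) p.2)) := by
              rw [ENNReal.tsum_mul_left, ENNReal.tsum_add, ENNReal.tsum_add]
          _ = K := by
              have hmid : ∑' p : ℤ×ℤ, zfE (2+2*s) p.1 * zfE (2*s) (k-p.1-p.2) =
                  zetE (2+2*s) * zetE (2*s) := by
                rw [ENNReal.tsum_prod (f := fun a b => zfE (2+2*s) a * zfE (2*s) (k - a - b))]
                calc ∑' (a : ℤ), ∑' (b : ℤ), zfE (2+2*s) a * zfE (2*s) (k - a - b)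
                    = ∑' (a : ℤ), zfE (2+2*s) a * ∑' (b : ℤ), zfE (2*s) (k - a - b) :=
                      tsum_congr fun a => ENNReal.tsum_mul_left
                  _ = ∑' (a : ℤ), zfE (2+2*s) a * zetE (2*s) :=
                      tsum_congr fun a => congrArg _ (tsum_shift (zfE (2*s)) (k - a))
                  _ = zetE (2+2*s) * zetE (2*s) := ENNReal.tsum_mul_right
              rw [hKdef, hmid, tsum_prod_mul, tsum_prod_mul]
              rfl
      have step4 : ∑' p : ℤ×ℤ, Y p ^ (2:ℕ) = ∑' p : ℤ×ℤ, wAE s φ p.1 ^ (2:ℕ) *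
          wAE s ψ p.2 ^ (2:ℕ) * wAE s ξ (k - p.1 - p.2) ^ (2:ℕ) :=
        tsum_congr fun p => by rw [hY, mul_pow, mul_pow]
      calc wAE s (R3D D t φ ψ ξ) k ^ (2:ℕ)
          ≤ (∑' p : ℤ×ℤ, X p * Y p) ^ (2:ℕ) := pow_le_pow_left₀ (zero_le) step1 2
        _ ≤ (∑' p : ℤ×ℤ, X p ^ (2:ℕ)) * (∑' p : ℤ×ℤ, Y p ^ (2:ℕ)) := step2
        _ ≤ K * (∑' p : ℤ×ℤ, Y p ^ (2:ℕ)) := mul_le_mul_left step3 _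
        _ = _ := by rw [step4]
  -- Summing the key bound over `k`
  have sumG : ∑' k : ℤ, ∑' p : ℤ×ℤ, wAE s φ p.1 ^ (2:ℕ) * wAE s ψ p.2 ^ (2:ℕ) *
      wAE s ξ (k - p.1 - p.2) ^ (2:ℕ) =
      (∑' n : ℤ, wAE s φ n ^ (2:ℕ)) * (∑' n : ℤ, wAE s ψ n ^ (2:ℕ)) *
        (∑' n : ℤ, wAE s ξ n ^ (2:ℕ)) := by
    calc ∑' k : ℤ, ∑' p : ℤ×ℤ, wAE s φ p.1 ^ (2:ℕ) * wAE s ψ p.2 ^ (2:ℕ) *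
          wAE s ξ (k - p.1 - p.2) ^ (2:ℕ)
        = ∑' p : ℤ×ℤ, ∑' k : ℤ, wAE s φ p.1 ^ (2:ℕ) * wAE s ψ p.2 ^ (2:ℕ) *
          wAE s ξ (k - p.1 - p.2) ^ (2:ℕ) := ENNReal.tsum_comm
      _ = ∑' p : ℤ×ℤ, (wAE s φ p.1 ^ (2:ℕ) * wAE s ψ p.2 ^ (2:ℕ)) *
          (∑' n : ℤ, wAE s ξ n ^ (2:ℕ)) := by
          refine tsum_congr fun p => ?_
          calc ∑' k : ℤ, wAE s φ p.1 ^ (2:ℕ) * wAE s ψ p.2 ^ (2:ℕ) *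
                wAE s ξ (k - p.1 - p.2) ^ (2:ℕ)
              = ∑' k : ℤ, (wAE s φ p.1 ^ (2:ℕ) * wAE s ψ p.2 ^ (2:ℕ)) *
                wAE s ξ (k - (p.1 + p.2)) ^ (2:ℕ) :=
                tsum_congr fun k => by
                  rw [show k - p.1 - p.2 = k - (p.1+p.2) from by ring]
            _ = (wAE s φ p.1 ^ (2:ℕ) * wAE s ψ p.2 ^ (2:ℕ)) *
                ∑' k : ℤ, wAE s ξ (k - (p.1 + p.2)) ^ (2:ℕ) := ENNReal.tsum_mul_left
            _ = (wAE s φ p.1 ^ (2:ℕ) * wAE s ψ p.2 ^ (2:ℕ)) *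
                (∑' n : ℤ, wAE s ξ n ^ (2:ℕ)) :=
                congrArg _ (tsum_shift' (fun n => wAE s ξ n ^ (2:ℕ)) (p.1 + p.2))
      _ = (∑' p : ℤ×ℤ, wAE s φ p.1 ^ (2:ℕ) * wAE s ψ p.2 ^ (2:ℕ)) *
          (∑' n : ℤ, wAE s ξ n ^ (2:ℕ)) := ENNReal.tsum_mul_right
      _ = _ :=
        congrArg (fun z => z * (∑' n : ℤ, wAE s ξ n ^ (2:ℕ)))
          (tsum_prod_mul (fun n => wAE s φ n ^ (2:ℕ)) (fun n => wAE s ψ n ^ (2:ℕ)))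
  have total : ∑' k : ℤ, wAE s (R3D D t φ ψ ξ) k ^ (2:ℕ) ≤
      K * ((∑' n : ℤ, wAE s φ n ^ (2:ℕ)) * (∑' n : ℤ, wAE s ψ n ^ (2:ℕ)) *
        (∑' n : ℤ, wAE s ξ n ^ (2:ℕ))) := by
    calc ∑' k : ℤ, wAE s (R3D D t φ ψ ξ) k ^ (2:ℕ)
        ≤ ∑' k : ℤ, K * ∑' p : ℤ×ℤ, wAE s φ p.1 ^ (2:ℕ) * wAE s ψ p.2 ^ (2:ℕ) *
            wAE s ξ (k - p.1 - p.2) ^ (2:ℕ) :=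
          Summable.tsum_le_tsum key ENNReal.summable ENNReal.summable
      _ = K * ∑' k : ℤ, ∑' p : ℤ×ℤ, wAE s φ p.1 ^ (2:ℕ) * wAE s ψ p.2 ^ (2:ℕ) *
            wAE s ξ (k - p.1 - p.2) ^ (2:ℕ) := ENNReal.tsum_mul_left
      _ = _ := by rw [sumG]
  have hProd : K * ((∑' n : ℤ, wAE s φ n ^ (2:ℕ)) * (∑' n : ℤ, wAE s ψ n ^ (2:ℕ)) *
      (∑' n : ℤ, wAE s ξ n ^ (2:ℕ))) ≠ ⊤ :=
    ENNReal.mul_ne_top hKtop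
      (ENNReal.mul_ne_top (ENNReal.mul_ne_top hSA hSB) hSC)
  have hRne : ∑' k : ℤ, wAE s (R3D D t φ ψ ξ) k ^ (2:ℕ) ≠ ⊤ :=
    ne_top_of_le_ne_top hProd total
  refine ⟨(memH_iff_ne_top s _).mpr hRne, ?_⟩
  rw [hnorm_eq s _ ((memH_iff_ne_top s _).mpr hRne), hnorm_eq s φ hφ, hnorm_eq s ψ hψ,
    hnorm_eq s ξ hξ]
  calc Real.sqrt ((∑' k : ℤ, wAE s (R3D D t φ ψ ξ) k ^ (2:ℕ)).toReal)
      ≤ Real.sqrt ((K * ((∑' n : ℤ, wAE s φ n ^ (2:ℕ)) * (∑' n : ℤ, wAE s ψ n ^ (2:ℕ)) *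
          (∑' n : ℤ, wAE s ξ n ^ (2:ℕ)))).toReal) :=
        Real.sqrt_le_sqrt (ENNReal.toReal_mono hProd total)
    _ = Real.sqrt K.toReal * Real.sqrt ((∑' n : ℤ, wAE s φ n ^ (2:ℕ)).toReal) *
        Real.sqrt ((∑' n : ℤ, wAE s ψ n ^ (2:ℕ)).toReal) *
        Real.sqrt ((∑' n : ℤ, wAE s ξ n ^ (2:ℕ)).toReal) :=
      sqrt_toReal_mul4 K _ _ _
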